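/- Let G be a DAG on a finite vertex set, let F be a set of vertices of G each having no incoming edges (the fixed nodes), and let V be the set of the remaining vertices. Let Z, R, N be pairwise disjoint subsets of V, and let v* ∈ V ∖ (Z ∪ R ∪ N) be a sink such that no parent of v* belongs to R and every parent p of v* satisfies at least one of the following: (a) p ∈ Z; (b) p ∈ F; (c) p has no parents, every child of p is a sink not belonging to R, and every child S of p with S ∈ Z ∪ N satisfies Pa(S) ∖ {p} ⊆ Z ∪ F. Then {v*} and R are d-separated by Z ∪ F in G, and {v*} and R are also d-separated by Z ∪ F ∪ N in G. -/
import Mathlib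


/-! ## Directed graphs, paths, d-separation -/

namespace DeltaSwig

variable {V : Type*}

/-- `b` is a descendant of `a`: reachable from `a` by a nonempty directed path. -/
def Descendant (E : V → V → Prop) (a b : V) : Prop := Relation.TransGen E a b

/-- A directed graph is a DAG if no vertex is related to itself by the
transitive closure of the edge relation. -/
def IsDAG (E : V → V → Prop) : Prop := ∀ v : V, ¬ Relation.TransGen E v v

/-- A path of length `k ≥ 1` between `v 0` and `v k`: pairwise distinct vertices,
consecutive vertices joined by an edge in either direction. -/
structure IsPath (E : V → V → Prop) (k : ℕ) (v : ℕ → V) : Prop where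
  one_le : 1 ≤ k
  inj : ∀ i ≤ k, ∀ j ≤ k, v i = v j → i = j
  adj : ∀ i < k, E (v i) (v (i + 1)) ∨ E (v (i + 1)) (v i)

/-- The interior vertex `v j` is a collider on the path `v`. -/
def IsCollider (E : V → V → Prop) (v : ℕ → V) (j : ℕ) : Prop :=
  E (v (j - 1)) (v j) ∧ E (v (j + 1)) (v j)

/-- The path `v` (of length `k`) is blocked by the set `Z`. -/
def Blocked (E : V → V → Prop) (k : ℕ) (v : ℕ → V) (Z : Set V) : Prop :=
  ∃ j, 0 < j ∧ j < k ∧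
    ((¬ IsCollider E v j ∧ v j ∈ Z) ∨
      (IsCollider E v j ∧ v j ∉ Z ∧ ∀ w, Descendant E (v j) w → w ∉ Z))

/-- `X` and `Y` are d-separated by `Z`: every path from a vertex of `X` to a
vertex of `Y` is blocked by `Z`. -/
def DSep (E : V → V → Prop) (X Y Z : Set V) : Prop :=
  ∀ (k : ℕ) (v : ℕ → V), IsPath E k v → v 0 ∈ X → v k ∈ Y → Blocked E k v Z

/-- Restriction of an edge relation to a set of kept vertices (vertex deletion). -/
def restrictEdge (E : V → V → Prop) (K : Set V) : V → V → Prop :=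
  fun a b => E a b ∧ a ∈ K ∧ b ∈ K

/-- The parents of a vertex. -/
def parents (E : V → V → Prop) (v : V) : Set V := {w | E w v}

end DeltaSwig

namespace DeltaSwig


theorem dsep_aux {V : Type*}
    (E : V → V → Prop)
    (F : Set V) (hF : ∀ f ∈ F, ∀ a, ¬ E a f)
    (Z R N : Set V)
    (hR : R ⊆ Fᶜ)
    (hZR : Disjoint Z R) (hRN : Disjoint R N)
    (v : V)
    (hsink : ∀ a, ¬ E v a)
    (hpR : ∀ p, E p v → p ∉ R)
    (hpar : ∀ p, E p v →
      p ∈ Z ∨ p ∈ F ∨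
        ((∀ a, ¬ E a p) ∧ (∀ c, E p c → (∀ a, ¬ E c a) ∧ c ∉ R) ∧
          (∀ c, E p c → c ∈ Z ∪ N → ∀ q, E q c → q ≠ p → q ∈ Z ∪ F)))
    (W : Set V) (hW1 : Z ∪ F ⊆ W) (hW2 : W ⊆ Z ∪ F ∪ N) :
    DSep E {v} R W := by
  intro k w hpath hw0 hwk
  simp only [Set.mem_singleton_iff] at hw0
  have h1k : 1 ≤ k := hpath.one_le
  have hEp : E (w 1) (w 0) := by
    rcases hpath.adj 0 (by omega) with h | h
    · rw [hw0] at h; exact absurd h (hsink _)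
    · exact h
  rw [hw0] at hEp
  have hpnotR : w 1 ∉ R := hpR _ hEp
  have hk2 : 2 ≤ k := by
    by_contra h
    have : k = 1 := by omega
    rw [this] at hwk; exact hpnotR hwk
  have hnc1 : ¬ IsCollider E w 1 := by
    rintro ⟨h, -⟩
    rw [hw0] at h; exact hsink _ h
  rcases hpar _ hEp with hpZ | hpF | ⟨hnp, hch, hq⟩
  · exact ⟨1, by omega, by omega, Or.inl ⟨hnc1, hW1 (Or.inl hpZ)⟩⟩
  · exact ⟨1, by omega, by omega, Or.inl ⟨hnc1, hW1 (Or.inr hpF)⟩⟩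
  · -- p has no parents; c := w 2 is a child of p
    have hEc : E (w 1) (w 2) := by
      rcases hpath.adj 1 (by omega) with h | h
      · exact h
      · exact absurd h (hnp _)
    obtain ⟨hcsink, hcnotR⟩ := hch _ hEc
    have hk3 : 3 ≤ k := by
      by_contra h
      have : k = 2 := by omega
      rw [this] at hwk; exact hcnotR hwk
    have hEq : E (w 3) (w 2) := by
      rcases hpath.adj 2 (by omega) with h | h
      · exact absurd h (hcsink _)
      · exact h
    have hcol2 : IsCollider E w 2 := ⟨hEc, hEq⟩
    by_cases hcW : w 2 ∈ W
    · -- w 2 ∈ W ⊆ Z ∪ F ∪ N, not in F, so in Z ∪ N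
      have hcZN : w 2 ∈ Z ∪ N := by
        rcases hW2 hcW with (h | h) | h
        · exact Or.inl h
        · exact absurd hEc (hF _ h _)
        · exact Or.inr h
      have hqne : w 3 ≠ w 1 := by
        intro h
        have := hpath.inj 3 (by omega) 1 (by omega) h
        omega
      have hqZF : w 3 ∈ Z ∪ F := hq _ hEc hcZN _ hEq hqne
      have hqnotR : w 3 ∉ R := by
        rcases hqZF with h | h
        · exact fun hr => hZR.ne_of_mem h hr rfl
        · exact fun hr => hR hr h
      have hk4 : 4 ≤ k := by
        by_contra h
        have : k = 3 := by omega
        rw [this] at hwk; exact hqnotR hwk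
      refine ⟨3, by omega, by omega, Or.inl ⟨?_, hW1 hqZF⟩⟩
      rintro ⟨h, -⟩
      exact hcsink _ h
    · have hno : ∀ u, ¬ Descendant E (w 2) u := by
        intro u hu
        induction hu with
        | single h => exact hcsink _ h
        | tail _ _ ih => exact ih
      exact ⟨2, by omega, by omega,
        Or.inr ⟨hcol2, hcW, fun u hu _ => hno u hu⟩⟩

/-- **Lemma D.1, d-separation with neutral controls.** Let `F`
be a set of fixed nodes (no incoming edges) in a DAG, and let `Z, R, N` be
pairwise disjoint subsets of the remaining vertices `Fᶜ`. Let `v ∈ Fᶜ` be a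
sink outside `Z ∪ R ∪ N` with no parent in `R`, each of whose parents `p`
satisfies: `p ∈ Z`, or `p ∈ F`, or (`p` has no parents, every child of `p` is
a sink not in `R`, and every child `c ∈ Z ∪ N` of `p` has all of its other
parents in `Z ∪ F`). Then `{v}` and `R` are d-separated by `Z ∪ F`, and also
by `Z ∪ F ∪ N`. -/
theorem dsep_neutral_controls
    {V : Type*} [Finite V] (E : V → V → Prop) (hDAG : IsDAG E)
    (F : Set V) (hF : ∀ f ∈ F, ∀ a, ¬ E a f)
    (Z R N : Set V)
    (hZ : Z ⊆ Fᶜ) (hR : R ⊆ Fᶜ) (hN : N ⊆ Fᶜ)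
    (hZR : Disjoint Z R) (hZN : Disjoint Z N) (hRN : Disjoint R N)
    (v : V) (hv : v ∈ Fᶜ) (hvZRN : v ∉ Z ∪ R ∪ N)
    (hsink : ∀ a, ¬ E v a)
    (hpR : ∀ p, E p v → p ∉ R)
    (hpar : ∀ p, E p v →
      p ∈ Z ∨ p ∈ F ∨
        ((∀ a, ¬ E a p) ∧ (∀ c, E p c → (∀ a, ¬ E c a) ∧ c ∉ R) ∧
          (∀ c, E p c → c ∈ Z ∪ N → ∀ q, E q c → q ≠ p → q ∈ Z ∪ F))) :
    DSep E {v} R (Z ∪ F) ∧ DSep E {v} R (Z ∪ F ∪ N) := by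
  constructor
  · exact dsep_aux E F hF Z R N hR hZR hRN v hsink hpR hpar (Z ∪ F)
      subset_rfl Set.subset_union_left
  · exact dsep_aux E F hF Z R N hR hZR hRN v hsink hpR hpar (Z ∪ F ∪ N)
      Set.subset_union_left subset_rfl

end DeltaSwig
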